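/- Let Σ be a (q,s)-biregular bipartite graph with bipartition X ∪ Y. For integers a, g, let G(a,g) := { A ⊆ X : A is 2-linked, |[A]| = a, |N(A)| = g } and set t := gs − aq. Fix 1 ≤ φ ≤ s−1 and a set F' ⊆ Y, and let G'(F') := { A ∈ G(a,g) : F' is a φ-approximation of A }. Then for every 1 ≤ ψ ≤ min{q,s}−1, there exists a family A₂ ⊆ 2^X × 2^Y of size |A₂| ≤ ( Σ_{i ≤ t/((s−φ)ψ)} \binom{gs}{i} ) · ( Σ_{i ≤ t/((q−ψ)ψ)} \binom{gsq}{i} ) and a map π₂ : G'(F') → A₂ such that for every A ∈ G'(F'), the pair π₂(A) is a ψ-approximation of A. -/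

import Mathlib

open Finset

/-- `distLE G m u v` : there is a walk of length at most `m` from `u` to `v`. -/
def distLE {V : Type} (G : SimpleGraph V) (m : ℕ) (u v : V) : Prop :=
  ∃ p : G.Walk u v, p.length ≤ m

/-- `MLinked G m A` : the set `A` is `m`-linked. -/
def MLinked {V : Type} (G : SimpleGraph V) (m : ℕ) (A : Finset V) : Prop :=
  ∀ u ∈ A, ∀ v ∈ A,
    Relation.ReflTransGen (fun a b => a ∈ A ∧ b ∈ A ∧ distLE G m a b) u v

/-- The neighborhood `N(A)` of a set of vertices. -/
def nbhd {V : Type} [Fintype V] [DecidableEq V] (G : SimpleGraph V)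
    [DecidableRel G.Adj] (A : Finset V) : Finset V :=
  A.biUnion fun v => G.neighborFinset v

/-- The closure `[A] = {v ∈ X : N(v) ⊆ N(A)}` of `A ⊆ X`. -/
def closureOf {V : Type} [Fintype V] [DecidableEq V] (G : SimpleGraph V)
    [DecidableRel G.Adj] (X A : Finset V) : Finset V :=
  X.filter fun v => G.neighborFinset v ⊆ nbhd G A

/-- `N(A)^φ = { y ∈ N(A) : |N(y) ∩ [A]| > φ }`. -/
def nbhdPhi {V : Type} [Fintype V] [DecidableEq V] (G : SimpleGraph V)
    [DecidableRel G.Adj] (X A : Finset V) (φ : ℕ) : Finset V :=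
  (nbhd G A).filter fun y => φ < (G.neighborFinset y ∩ closureOf G X A).card

private lemma nbhd_comm_sum {V : Type} [Fintype V] [DecidableEq V] (G : SimpleGraph V)
    [DecidableRel G.Adj] (B C : Finset V) :
    ∑ v ∈ B, (G.neighborFinset v ∩ C).card = ∑ u ∈ C, (G.neighborFinset u ∩ B).card := by
  have key : ∀ (Q : Finset V) (v : V),
      G.neighborFinset v ∩ Q = Q.filter (fun u => G.Adj v u) := by
    intro Q v; ext u
    simp [SimpleGraph.mem_neighborFinset, and_comm]
  simp only [key, card_filter]
  rw [Finset.sum_comm]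
  exact Finset.sum_congr rfl fun u _ => Finset.sum_congr rfl fun v _ => by
    simp only [G.adj_comm v u]

private lemma count_small_subsets {V : Type} [DecidableEq V] (U : Finset V) (N k : ℕ)
    (hU : U.card ≤ N) :
    ((U.powerset).filter (fun W => W.card ≤ k)).card ≤ ∑ i ∈ range (k + 1), N.choose i := by
  calc ((U.powerset).filter (fun W => W.card ≤ k)).card
      ≤ ((range (k + 1)).biUnion (fun i => U.powersetCard i)).card := by
        apply card_le_card; intro W hW
        simp only [mem_filter, mem_powerset] at hW
        exact mem_biUnion.mpr ⟨W.card, mem_range.mpr (by omega),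
          mem_powersetCard.mpr ⟨hW.1, rfl⟩⟩
    _ ≤ ∑ i ∈ range (k + 1), (U.powersetCard i).card := card_biUnion_le
    _ ≤ ∑ i ∈ range (k + 1), N.choose i := by
        apply sum_le_sum; intro i _
        rw [card_powersetCard]; exact Nat.choose_le_choose i hU

private lemma phase1 {V : Type} [Fintype V] [DecidableEq V] (G : SimpleGraph V)
    [DecidableRel G.Adj] (X A F' : Finset V) (q s φ ψ : ℕ)
    (hdegX : ∀ x ∈ X, G.degree x = q)
    (hNphi : ∀ v ∈ nbhd G A, v ∉ F' → (G.neighborFinset v ∩ closureOf G X A).card ≤ φ) :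
    ∀ n (F : Finset V), F' ⊆ F → F ⊆ nbhd G A → (nbhd G A \ F).card ≤ n →
      ∃ W : Finset V, W ⊆ closureOf G X A ∧
        (∀ u ∈ closureOf G X A,
          q - ψ ≤ (G.neighborFinset u ∩ (F ∪ nbhd G W)).card) ∧
        W.card * ((ψ + 1) * (s - φ)) ≤
          ∑ v ∈ nbhd G A \ F, (s - (G.neighborFinset v ∩ closureOf G X A).card) := by
  intro n
  induction n with
  | zero =>
    intro F hF'F hFA hn
    refine ⟨∅, empty_subset _, ?_, by simp⟩
    intro u hu
    have hD : nbhd G A \ F = ∅ := card_eq_zero.mp (Nat.le_zero.mp hn)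
    have hAF : nbhd G A ⊆ F := by
      intro v hv
      by_contra hvF
      exact (notMem_empty v) (hD ▸ mem_sdiff.mpr ⟨hv, hvF⟩)
    have huX : u ∈ X := (mem_filter.mp hu).1
    have huN : G.neighborFinset u ⊆ nbhd G A := (mem_filter.mp hu).2
    have : G.neighborFinset u ∩ (F ∪ nbhd G ∅) = G.neighborFinset u := by
      apply inter_eq_left.mpr
      intro v hv
      exact mem_union_left _ (hAF (huN hv))
    rw [this, SimpleGraph.card_neighborFinset_eq_degree, hdegX u huX]
    omega
  | succ n ih =>
    intro F hF'F hFA hn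
    by_cases hcov : ∀ u ∈ closureOf G X A, q - ψ ≤ (G.neighborFinset u ∩ F).card
    · refine ⟨∅, empty_subset _, ?_, by simp⟩
      intro u hu
      calc q - ψ ≤ (G.neighborFinset u ∩ F).card := hcov u hu
        _ ≤ (G.neighborFinset u ∩ (F ∪ nbhd G ∅)).card :=
          card_le_card (inter_subset_inter_left subset_union_left)
    · push_neg at hcov
      obtain ⟨u, hu, hlt⟩ := hcov
      have huX : u ∈ X := (mem_filter.mp hu).1
      have huN : G.neighborFinset u ⊆ nbhd G A := (mem_filter.mp hu).2
      have hdeg : (G.neighborFinset u).card = q := by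
        rw [SimpleGraph.card_neighborFinset_eq_degree]; exact hdegX u huX
      have hsplit : (G.neighborFinset u ∩ F).card + (G.neighborFinset u \ F).card = q := by
        rw [card_inter_add_card_sdiff, hdeg]
      have hbig : ψ + 1 ≤ (G.neighborFinset u \ F).card := by omega
      set F₂ := F ∪ G.neighborFinset u with hF₂
      have hF'F₂ : F' ⊆ F₂ := hF'F.trans subset_union_left
      have hF₂A : F₂ ⊆ nbhd G A := union_subset hFA huN
      have hDeq : nbhd G A \ F₂ = (nbhd G A \ F) \ G.neighborFinset u := by
        ext v; simp only [hF₂, mem_sdiff, mem_union]; tauto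
      have hsubD : G.neighborFinset u \ F ⊆ (nbhd G A \ F) ∩ G.neighborFinset u := by
        intro v hv
        rw [mem_sdiff] at hv
        exact mem_inter.mpr ⟨mem_sdiff.mpr ⟨huN hv.1, hv.2⟩, hv.1⟩
      have hcardI : ψ + 1 ≤ ((nbhd G A \ F) ∩ G.neighborFinset u).card :=
        le_trans hbig (card_le_card hsubD)
      have hsplit2 : ((nbhd G A \ F) ∩ G.neighborFinset u).card
          + ((nbhd G A \ F) \ G.neighborFinset u).card = (nbhd G A \ F).card :=
        card_inter_add_card_sdiff _ _
      have hn2 : (nbhd G A \ F₂).card ≤ n := by rw [hDeq]; omega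
      obtain ⟨W₂, hW₂sub, hW₂cov, hW₂cnt⟩ := ih F₂ hF'F₂ hF₂A hn2
      refine ⟨insert u W₂, insert_subset hu hW₂sub, ?_, ?_⟩
      · intro u' hu'
        have hset : F ∪ nbhd G (insert u W₂) = F₂ ∪ nbhd G W₂ := by
          simp only [nbhd, biUnion_insert, hF₂]
          ext v; simp only [mem_union]; tauto
        rw [hset]
        exact hW₂cov u' hu'
      · have hsum : ∑ v ∈ (nbhd G A \ F) ∩ G.neighborFinset u,
              (s - (G.neighborFinset v ∩ closureOf G X A).card)
            + ∑ v ∈ (nbhd G A \ F) \ G.neighborFinset u,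
              (s - (G.neighborFinset v ∩ closureOf G X A).card)
            = ∑ v ∈ nbhd G A \ F, (s - (G.neighborFinset v ∩ closureOf G X A).card) :=
          sum_inter_add_sum_sdiff _ _ _
        have hterm : ((ψ + 1) * (s - φ)) ≤
            ∑ v ∈ (nbhd G A \ F) ∩ G.neighborFinset u,
              (s - (G.neighborFinset v ∩ closureOf G X A).card) := by
          have h1 : ∀ v ∈ (nbhd G A \ F) ∩ G.neighborFinset u,
              s - φ ≤ s - (G.neighborFinset v ∩ closureOf G X A).card := by
            intro v hv
            have hv1 := mem_sdiff.mp (mem_inter.mp hv).1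
            have : (G.neighborFinset v ∩ closureOf G X A).card ≤ φ :=
              hNphi v hv1.1 (fun h => hv1.2 (hF'F h))
            omega
          calc (ψ + 1) * (s - φ)
              ≤ ((nbhd G A \ F) ∩ G.neighborFinset u).card * (s - φ) :=
                Nat.mul_le_mul_right _ hcardI
            _ = ((nbhd G A \ F) ∩ G.neighborFinset u).card • (s - φ) := by
                rw [smul_eq_mul]
            _ ≤ _ := Finset.card_nsmul_le_sum _ _ _ h1
        calc (insert u W₂).card * ((ψ + 1) * (s - φ))
            ≤ (W₂.card + 1) * ((ψ + 1) * (s - φ)) :=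
              Nat.mul_le_mul_right _ (card_insert_le _ _)
          _ = W₂.card * ((ψ + 1) * (s - φ)) + (ψ + 1) * (s - φ) := by ring
          _ ≤ (∑ v ∈ nbhd G A \ F₂, (s - (G.neighborFinset v ∩ closureOf G X A).card))
              + ∑ v ∈ (nbhd G A \ F) ∩ G.neighborFinset u,
                (s - (G.neighborFinset v ∩ closureOf G X A).card) :=
              Nat.add_le_add hW₂cnt hterm
          _ = _ := by rw [hDeq, Nat.add_comm]; exact hsum

private lemma phase2 {V : Type} [Fintype V] [DecidableEq V] (G : SimpleGraph V)
    [DecidableRel G.Adj] (X A F'' : Finset V) (q ψ : ℕ) :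
    ∀ n (S : Finset V),
      S ⊆ X.filter (fun u => q - ψ ≤ (G.neighborFinset u ∩ F'').card) → S.card ≤ n →
      ∃ W : Finset V,
        W ⊆ nbhd G (X.filter (fun u => q - ψ ≤ (G.neighborFinset u ∩ F'').card)) ∧
        (∀ v ∈ W, v ∉ nbhd G A) ∧
        (∀ v, v ∉ nbhd G A → (G.neighborFinset v ∩ (S \ nbhd G W)).card ≤ ψ) ∧
        W.card * ((ψ + 1) * (q - ψ)) ≤
          ∑ u ∈ S \ closureOf G X A, (G.neighborFinset u ∩ F'').card := by
  intro n
  induction n with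
  | zero =>
    intro S hS hn
    have hS0 : S = ∅ := card_eq_zero.mp (Nat.le_zero.mp hn)
    refine ⟨∅, empty_subset _, by simp, ?_, by simp⟩
    intro v _
    simp [hS0]
  | succ n ih =>
    intro S hS hn
    by_cases hcov : ∀ v, v ∉ nbhd G A → (G.neighborFinset v ∩ S).card ≤ ψ
    · refine ⟨∅, empty_subset _, by simp, ?_, by simp⟩
      intro v hv
      calc (G.neighborFinset v ∩ (S \ nbhd G ∅)).card
          ≤ (G.neighborFinset v ∩ S).card := by
            apply card_le_card
            exact inter_subset_inter_left sdiff_subset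
        _ ≤ ψ := hcov v hv
    · push_neg at hcov
      obtain ⟨v, hvA, hlt⟩ := hcov
      have hvcl : ∀ u ∈ G.neighborFinset v, u ∉ closureOf G X A := by
        intro u hu hucl
        have huN : G.neighborFinset u ⊆ nbhd G A := (mem_filter.mp hucl).2
        have : v ∈ G.neighborFinset u := by
          rw [SimpleGraph.mem_neighborFinset] at hu ⊢
          exact hu.symm
        exact hvA (huN this)
      set S₂ := S \ G.neighborFinset v with hS₂
      have hsplit : (S ∩ G.neighborFinset v).card + (S \ G.neighborFinset v).card = S.card :=
        card_inter_add_card_sdiff _ _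
      have hlt' : ψ < (S ∩ G.neighborFinset v).card := by rwa [inter_comm] at hlt
      have hcards : ψ + 1 ≤ (S ∩ G.neighborFinset v).card := hlt'
      have hn2 : S₂.card ≤ n := by
        have : S₂.card = (S \ G.neighborFinset v).card := by rw [hS₂]
        omega
      obtain ⟨W₂, hW₂U, hW₂A, hW₂cov, hW₂cnt⟩ := ih S₂ (sdiff_subset.trans hS) hn2
      have hvU : v ∈ nbhd G (X.filter (fun u => q - ψ ≤ (G.neighborFinset u ∩ F'').card)) := by
        have : (S ∩ G.neighborFinset v).Nonempty := by
          rw [← card_pos]; omega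
        obtain ⟨u, hu⟩ := this
        have hu1 := (mem_inter.mp hu).1
        have hu2 := (mem_inter.mp hu).2
        refine mem_biUnion.mpr ⟨u, hS hu1, ?_⟩
        rw [SimpleGraph.mem_neighborFinset] at hu2 ⊢
        exact hu2.symm
      refine ⟨insert v W₂, insert_subset hvU hW₂U, ?_, ?_, ?_⟩
      · intro v' hv'
        rcases mem_insert.mp hv' with h | h
        · rwa [h]
        · exact hW₂A v' h
      · intro v' hv'
        have hset : S \ nbhd G (insert v W₂) = S₂ \ nbhd G W₂ := by
          simp only [nbhd, biUnion_insert, hS₂]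
          ext u; simp only [mem_sdiff, mem_union]; tauto
        rw [hset]
        exact hW₂cov v' hv'
      · have hsum : ∑ u ∈ (S \ closureOf G X A) ∩ G.neighborFinset v,
              (G.neighborFinset u ∩ F'').card
            + ∑ u ∈ (S \ closureOf G X A) \ G.neighborFinset v,
              (G.neighborFinset u ∩ F'').card
            = ∑ u ∈ S \ closureOf G X A, (G.neighborFinset u ∩ F'').card :=
          sum_inter_add_sum_sdiff _ _ _
        have heq1 : (S \ closureOf G X A) ∩ G.neighborFinset v = S ∩ G.neighborFinset v := by
          ext u
          simp only [mem_inter, mem_sdiff]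
          constructor
          · tauto
          · intro h; exact ⟨⟨h.1, hvcl u h.2⟩, h.2⟩
        have heq2 : (S \ closureOf G X A) \ G.neighborFinset v = S₂ \ closureOf G X A := by
          ext u; simp only [mem_sdiff, hS₂]; tauto
        have hterm : (ψ + 1) * (q - ψ) ≤
            ∑ u ∈ (S \ closureOf G X A) ∩ G.neighborFinset v,
              (G.neighborFinset u ∩ F'').card := by
          rw [heq1]
          have h1 : ∀ u ∈ S ∩ G.neighborFinset v,
              q - ψ ≤ (G.neighborFinset u ∩ F'').card := by
            intro u hu
            exact (mem_filter.mp (hS (mem_inter.mp hu).1)).2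
          calc (ψ + 1) * (q - ψ) ≤ (S ∩ G.neighborFinset v).card * (q - ψ) :=
                Nat.mul_le_mul_right _ hcards
            _ = (S ∩ G.neighborFinset v).card • (q - ψ) := by rw [smul_eq_mul]
            _ ≤ _ := Finset.card_nsmul_le_sum _ _ _ h1
        calc (insert v W₂).card * ((ψ + 1) * (q - ψ))
            ≤ (W₂.card + 1) * ((ψ + 1) * (q - ψ)) :=
              Nat.mul_le_mul_right _ (card_insert_le _ _)
          _ = W₂.card * ((ψ + 1) * (q - ψ)) + (ψ + 1) * (q - ψ) := by ring
          _ ≤ (∑ u ∈ S₂ \ closureOf G X A, (G.neighborFinset u ∩ F'').card)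
              + ∑ u ∈ (S \ closureOf G X A) ∩ G.neighborFinset v,
                (G.neighborFinset u ∩ F'').card := Nat.add_le_add hW₂cnt hterm
          _ = _ := by rw [← heq2, Nat.add_comm]; exact hsum

/-- The decoder's `S₀`: vertices of `X` with at least `q - ψ` neighbours in
`F' ∪ N(W₁)`. -/
private def decS0 {V : Type} [Fintype V] [DecidableEq V] (G : SimpleGraph V)
    [DecidableRel G.Adj] (X F' : Finset V) (q ψ : ℕ) (W₁ : Finset V) : Finset V :=
  X.filter (fun u => q - ψ ≤ (G.neighborFinset u ∩ (F' ∪ nbhd G W₁)).card)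

/-- The decoder. -/
private def decode {V : Type} [Fintype V] [DecidableEq V] (G : SimpleGraph V)
    [DecidableRel G.Adj] (X Y F' : Finset V) (q ψ : ℕ) (W₁ W₂ : Finset V) :
    Finset V × Finset V :=
  (decS0 G X F' q ψ W₁ \ nbhd G W₂,
   (F' ∪ nbhd G W₁) ∪ Y.filter
     (fun v => ψ < (G.neighborFinset v ∩ (decS0 G X F' q ψ W₁ \ nbhd G W₂)).card))

theorem psi_approximation_family {V : Type} [Fintype V] [DecidableEq V]
    (G : SimpleGraph V) [DecidableRel G.Adj] (X Y : Finset V) (q s : ℕ)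
    (hdisj : Disjoint X Y) (hunion : X ∪ Y = Finset.univ)
    (hbip : ∀ u v : V, G.Adj u v → (u ∈ X ∧ v ∈ Y) ∨ (u ∈ Y ∧ v ∈ X))
    (hdegX : ∀ x ∈ X, G.degree x = q) (hdegY : ∀ y ∈ Y, G.degree y = s)
    (a g : ℕ) (t : ℝ) (ht : t = (g : ℝ) * s - (a : ℝ) * q)
    (φ : ℕ) (hφ1 : 1 ≤ φ) (hφ2 : φ ≤ s - 1) (F' : Finset V)
    (ψ : ℕ) (hψ1 : 1 ≤ ψ) (hψ2 : ψ ≤ min q s - 1) :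
    ∃ A₂ : Finset (Finset V × Finset V),
      (A₂.card : ℝ) ≤
        (∑ i ∈ Finset.range (⌊t / (((s : ℝ) - φ) * ψ)⌋₊ + 1),
          ((g * s).choose i : ℝ)) *
        (∑ i ∈ Finset.range (⌊t / (((q : ℝ) - ψ) * ψ)⌋₊ + 1),
          ((g * s * q).choose i : ℝ)) ∧
      ∀ A : Finset V, A ⊆ X → MLinked G 2 A →
        (closureOf G X A).card = a → (nbhd G A).card = g →
        (nbhdPhi G X A φ ⊆ F' ∧ F' ⊆ nbhd G A ∧ closureOf G X A ⊆ nbhd G F') →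
        ∃ p ∈ A₂,
          p.2 ⊆ nbhd G A ∧ closureOf G X A ⊆ p.1 ∧
          (∀ u ∈ p.1, q - ψ ≤ (G.neighborFinset u ∩ p.2).card) ∧
          (∀ v ∈ Y \ p.2, s - ψ ≤ (G.neighborFinset v ∩ (X \ p.1)).card) := by
  classical
  have hminq := Nat.min_le_left q s
  have hmins := Nat.min_le_right q s
  have hq2 : ψ + 1 ≤ q := by omega
  have hs2 : ψ + 1 ≤ s := by omega
  have hφs : φ + 1 ≤ s := by omega
  by_cases hex : ∃ A : Finset V, A ⊆ X ∧ MLinked G 2 A ∧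
      (closureOf G X A).card = a ∧ (nbhd G A).card = g ∧
      (nbhdPhi G X A φ ⊆ F' ∧ F' ⊆ nbhd G A ∧ closureOf G X A ⊆ nbhd G F')
  case neg =>
    refine ⟨∅, by simpa using by positivity, ?_⟩
    intro A h1 h2 h3 h4 h5
    exact absurd ⟨A, h1, h2, h3, h4, h5⟩ hex
  case pos =>
  obtain ⟨A₀, hA₀X, _, hA₀a, hA₀g, hA₀1, hA₀2, hA₀3⟩ := hex
  -- bipartiteness helpers
  have hXnY : ∀ x ∈ X, x ∉ Y := fun x hx => disjoint_left.mp hdisj hx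
  have hnbX : ∀ x ∈ X, G.neighborFinset x ⊆ Y := by
    intro x hx u hu
    rw [SimpleGraph.mem_neighborFinset] at hu
    rcases hbip x u hu with h | h
    · exact h.2
    · exact absurd h.1 (hXnY x hx)
  have hnbY : ∀ y ∈ Y, G.neighborFinset y ⊆ X := by
    intro y hy u hu
    rw [SimpleGraph.mem_neighborFinset] at hu
    rcases hbip y u hu with h | h
    · exact absurd hy (hXnY y h.1)
    · exact h.2
  have hnbdY : ∀ A' : Finset V, A' ⊆ X → nbhd G A' ⊆ Y := by
    intro A' hA' v hv
    obtain ⟨x, hx, hvx⟩ := mem_biUnion.mp hv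
    exact hnbX x (hA' hx) hvx
  have hnbdcard : ∀ (B : Finset V) (m : ℕ), B ⊆ Y → (nbhd G B).card ≤ B.card * s := by
    intro B m hBY
    calc (nbhd G B).card ≤ ∑ v ∈ B, (G.neighborFinset v).card := card_biUnion_le
      _ = ∑ v ∈ B, s := sum_congr rfl (fun v hv => by
          rw [SimpleGraph.card_neighborFinset_eq_degree]; exact hdegY v (hBY hv))
      _ = B.card * s := by rw [sum_const, smul_eq_mul]
  have hF'Y : F' ⊆ Y := hA₀2.trans (hnbdY A₀ hA₀X)
  have hF'g : F'.card ≤ g := by rw [← hA₀g]; exact card_le_card hA₀2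
  have hU1card : (nbhd G F').card ≤ g * s :=
    le_trans (hnbdcard F' 0 hF'Y) (Nat.mul_le_mul_right s hF'g)
  set t1 := ⌊t / (((s : ℝ) - φ) * ψ)⌋₊ with ht1
  set t2 := ⌊t / (((q : ℝ) - ψ) * ψ)⌋₊ with ht2
  set I1 : Finset (Finset V) := (nbhd G F').powerset.filter
    (fun W₁ => W₁.card ≤ t1 ∧ (nbhd G (decS0 G X F' q ψ W₁)).card ≤ g * s * q) with hI1
  refine ⟨I1.biUnion (fun W₁ =>
    ((nbhd G (decS0 G X F' q ψ W₁)).powerset.filter (fun W₂ => W₂.card ≤ t2)).image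
      (decode G X Y F' q ψ W₁)), ?_, ?_⟩
  · -- cardinality bound
    have hnat : (I1.biUnion (fun W₁ =>
        ((nbhd G (decS0 G X F' q ψ W₁)).powerset.filter (fun W₂ => W₂.card ≤ t2)).image
          (decode G X Y F' q ψ W₁))).card ≤
        (∑ i ∈ range (t1 + 1), (g * s).choose i) *
        (∑ i ∈ range (t2 + 1), (g * s * q).choose i) := by
      calc (I1.biUnion _).card
          ≤ ∑ W₁ ∈ I1,
            (((nbhd G (decS0 G X F' q ψ W₁)).powerset.filter (fun W₂ => W₂.card ≤ t2)).image
              (decode G X Y F' q ψ W₁)).card := card_biUnion_le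
        _ ≤ ∑ W₁ ∈ I1, (∑ i ∈ range (t2 + 1), (g * s * q).choose i) := by
            apply sum_le_sum
            intro W₁ hW₁
            exact le_trans (card_image_le)
              (count_small_subsets _ _ _ ((mem_filter.mp hW₁).2.2))
        _ = I1.card * (∑ i ∈ range (t2 + 1), (g * s * q).choose i) := by
            rw [sum_const, smul_eq_mul]
        _ ≤ (∑ i ∈ range (t1 + 1), (g * s).choose i) *
            (∑ i ∈ range (t2 + 1), (g * s * q).choose i) := by
            apply Nat.mul_le_mul_right
            refine le_trans (card_le_card ?_) (count_small_subsets _ _ t1 hU1card)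
            intro W hW
            simp only [hI1, mem_filter] at hW ⊢
            exact ⟨hW.1, hW.2.1⟩
    calc ((I1.biUnion _).card : ℝ)
        ≤ (((∑ i ∈ range (t1 + 1), (g * s).choose i) *
            (∑ i ∈ range (t2 + 1), (g * s * q).choose i) : ℕ) : ℝ) := Nat.cast_le.mpr hnat
      _ = _ := by push_cast; ring
  · -- main part
    intro A hAX hML hca hcg hF
    obtain ⟨h1, h2, h3⟩ := hF
    have hNAY : nbhd G A ⊆ Y := hnbdY A hAX
    have hclX : closureOf G X A ⊆ X := filter_subset _ _
    have hdegN : ∀ v ∈ nbhd G A, (G.neighborFinset v).card = s := fun v hv => by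
      rw [SimpleGraph.card_neighborFinset_eq_degree]; exact hdegY v (hNAY hv)
    have hdegCl : ∀ u ∈ closureOf G X A, (G.neighborFinset u).card = q := fun u hu => by
      rw [SimpleGraph.card_neighborFinset_eq_degree]; exact hdegX u (hclX hu)
    have hdccl : ∑ u ∈ closureOf G X A, (G.neighborFinset u ∩ nbhd G A).card = a * q := by
      calc ∑ u ∈ closureOf G X A, (G.neighborFinset u ∩ nbhd G A).card
          = ∑ u ∈ closureOf G X A, q := by
            apply sum_congr rfl
            intro u hu
            rw [inter_eq_left.mpr (mem_filter.mp hu).2]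
            exact hdegCl u hu
        _ = a * q := by rw [sum_const, smul_eq_mul, hca]
    have hdc : ∑ v ∈ nbhd G A, (G.neighborFinset v ∩ closureOf G X A).card = a * q := by
      rw [nbhd_comm_sum]; exact hdccl
    have hxle : ∀ v ∈ nbhd G A, (G.neighborFinset v ∩ closureOf G X A).card ≤ s :=
      fun v hv => le_trans (card_le_card inter_subset_left) (le_of_eq (hdegN v hv))
    have hE : (∑ v ∈ nbhd G A, (s - (G.neighborFinset v ∩ closureOf G X A).card)) + a * q
        = g * s := by
      rw [← hdc, ← sum_add_distrib]
      calc ∑ v ∈ nbhd G A,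
            ((s - (G.neighborFinset v ∩ closureOf G X A).card)
              + (G.neighborFinset v ∩ closureOf G X A).card)
          = ∑ v ∈ nbhd G A, s :=
            sum_congr rfl fun v hv => Nat.sub_add_cancel (hxle v hv)
        _ = g * s := by rw [sum_const, smul_eq_mul, hcg]
    have haq : a * q ≤ g * s := by omega
    have htcast : t = ((g * s - a * q : ℕ) : ℝ) := by
      rw [ht, Nat.cast_sub haq]; push_cast; ring
    -- phase 1
    have hNphi : ∀ v ∈ nbhd G A, v ∉ F' →
        (G.neighborFinset v ∩ closureOf G X A).card ≤ φ := by
      intro v hv hvF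
      by_contra hc
      push_neg at hc
      exact hvF (h1 (mem_filter.mpr ⟨hv, hc⟩))
    obtain ⟨W₁, hW₁cl, hW₁cov, hW₁cnt⟩ :=
      phase1 G X A F' q s φ ψ hdegX hNphi (nbhd G A \ F').card F' subset_rfl h2 le_rfl
    have hW₁U : W₁ ⊆ nbhd G F' := hW₁cl.trans h3
    have hcnt1 : W₁.card * ((ψ + 1) * (s - φ)) ≤ g * s - a * q := by
      have h4 : (∑ v ∈ nbhd G A \ F', (s - (G.neighborFinset v ∩ closureOf G X A).card))
          ≤ ∑ v ∈ nbhd G A, (s - (G.neighborFinset v ∩ closureOf G X A).card) :=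
        sum_le_sum_of_subset sdiff_subset
      omega
    have hφs' : φ ≤ s := by omega
    have hψs' : ψ ≤ q := by omega
    have hW₁t1 : W₁.card ≤ t1 := by
      rw [ht1]
      apply Nat.le_floor
      have hpos : (0 : ℝ) < ((s : ℝ) - φ) * ψ := by
        have hh1 : (φ : ℝ) + 1 ≤ s := by exact_mod_cast hφs
        have hh2 : (1 : ℝ) ≤ ψ := by exact_mod_cast hψ1
        nlinarith
      rw [le_div_iff₀ hpos]
      have hcast : (W₁.card : ℝ) * (((s : ℝ) - φ) * ψ)
          = ((W₁.card * ((s - φ) * ψ) : ℕ) : ℝ) := by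
        push_cast [Nat.cast_sub hφs']
        ring
      rw [hcast, htcast, Nat.cast_le]
      calc W₁.card * ((s - φ) * ψ) ≤ W₁.card * ((ψ + 1) * (s - φ)) := by
            apply Nat.mul_le_mul_left
            rw [Nat.mul_comm]
            exact Nat.mul_le_mul (Nat.le_succ ψ) le_rfl
        _ ≤ g * s - a * q := hcnt1
    -- the set F''
    have hnbW₁ : nbhd G W₁ ⊆ nbhd G A := by
      intro v hv
      obtain ⟨u, hu, hv'⟩ := mem_biUnion.mp hv
      exact (mem_filter.mp (hW₁cl hu)).2 hv'
    have hF''A : F' ∪ nbhd G W₁ ⊆ nbhd G A := union_subset h2 hnbW₁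
    have hF''Y : F' ∪ nbhd G W₁ ⊆ Y := hF''A.trans hNAY
    have hF''g : (F' ∪ nbhd G W₁).card ≤ g := by
      rw [← hcg]; exact card_le_card hF''A
    have hS0X : decS0 G X F' q ψ W₁ ⊆ X := filter_subset _ _
    have hclS0 : closureOf G X A ⊆ decS0 G X F' q ψ W₁ := fun u hu =>
      mem_filter.mpr ⟨hclX hu, hW₁cov u hu⟩
    have hqψ1 : 1 ≤ q - ψ := by omega
    have hS0sub : decS0 G X F' q ψ W₁ ⊆ nbhd G (F' ∪ nbhd G W₁) := by
      intro u hu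
      have h := (mem_filter.mp hu).2
      have hne : (G.neighborFinset u ∩ (F' ∪ nbhd G W₁)).Nonempty := by
        rw [← card_pos]; omega
      obtain ⟨v, hv⟩ := hne
      refine mem_biUnion.mpr ⟨v, (mem_inter.mp hv).2, ?_⟩
      have := (mem_inter.mp hv).1
      rw [SimpleGraph.mem_neighborFinset] at this ⊢
      exact this.symm
    have hS0card : (decS0 G X F' q ψ W₁).card ≤ g * s :=
      le_trans (card_le_card hS0sub)
        (le_trans (hnbdcard _ 0 hF''Y) (Nat.mul_le_mul_right s hF''g))
    have hU2card : (nbhd G (decS0 G X F' q ψ W₁)).card ≤ g * s * q := by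
      calc (nbhd G (decS0 G X F' q ψ W₁)).card
          ≤ ∑ u ∈ decS0 G X F' q ψ W₁, (G.neighborFinset u).card := card_biUnion_le
        _ = ∑ u ∈ decS0 G X F' q ψ W₁, q := by
            apply sum_congr rfl
            intro u hu
            rw [SimpleGraph.card_neighborFinset_eq_degree]
            exact hdegX u (hS0X hu)
        _ = (decS0 G X F' q ψ W₁).card * q := by rw [sum_const, smul_eq_mul]
        _ ≤ g * s * q := Nat.mul_le_mul_right q hS0card
    have hW₁I1 : W₁ ∈ I1 := by
      rw [hI1, mem_filter, mem_powerset]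
      exact ⟨hW₁U, hW₁t1, hU2card⟩
    -- phase 2
    obtain ⟨W₂, hW₂U, hW₂A, hW₂cov, hW₂cnt⟩ :=
      phase2 G X A (F' ∪ nbhd G W₁) q ψ (decS0 G X F' q ψ W₁).card (decS0 G X F' q ψ W₁)
        subset_rfl le_rfl
    -- counting for phase 2
    have hdcX : ∑ u ∈ X, (G.neighborFinset u ∩ nbhd G A).card = g * s := by
      rw [nbhd_comm_sum]
      calc ∑ v ∈ nbhd G A, (G.neighborFinset v ∩ X).card
          = ∑ v ∈ nbhd G A, s := by
            apply sum_congr rfl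
            intro v hv
            rw [inter_eq_left.mpr (hnbY v (hNAY hv))]
            exact hdegN v hv
        _ = g * s := by rw [sum_const, smul_eq_mul, hcg]
    have hsplitX : (∑ u ∈ X \ closureOf G X A, (G.neighborFinset u ∩ nbhd G A).card)
        + ∑ u ∈ closureOf G X A, (G.neighborFinset u ∩ nbhd G A).card
        = ∑ u ∈ X, (G.neighborFinset u ∩ nbhd G A).card := sum_sdiff hclX
    have hcost2 : (∑ u ∈ decS0 G X F' q ψ W₁ \ closureOf G X A,
        (G.neighborFinset u ∩ (F' ∪ nbhd G W₁)).card) ≤ g * s - a * q := by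
      have hs1 : (∑ u ∈ decS0 G X F' q ψ W₁ \ closureOf G X A,
          (G.neighborFinset u ∩ (F' ∪ nbhd G W₁)).card)
          ≤ ∑ u ∈ decS0 G X F' q ψ W₁ \ closureOf G X A,
            (G.neighborFinset u ∩ nbhd G A).card :=
        sum_le_sum fun u _ => card_le_card (inter_subset_inter Subset.rfl hF''A)
      have hs2' : (∑ u ∈ decS0 G X F' q ψ W₁ \ closureOf G X A,
          (G.neighborFinset u ∩ nbhd G A).card)
          ≤ ∑ u ∈ X \ closureOf G X A, (G.neighborFinset u ∩ nbhd G A).card :=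
        sum_le_sum_of_subset (sdiff_subset_sdiff hS0X Subset.rfl)
      omega
    have hcnt2 : W₂.card * ((ψ + 1) * (q - ψ)) ≤ g * s - a * q := le_trans hW₂cnt hcost2
    have hW₂t2 : W₂.card ≤ t2 := by
      rw [ht2]
      apply Nat.le_floor
      have hpos : (0 : ℝ) < ((q : ℝ) - ψ) * ψ := by
        have hh1 : (ψ : ℝ) + 1 ≤ q := by exact_mod_cast hq2
        have hh2 : (1 : ℝ) ≤ ψ := by exact_mod_cast hψ1
        nlinarith
      rw [le_div_iff₀ hpos]
      have hcast : (W₂.card : ℝ) * (((q : ℝ) - ψ) * ψ)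
          = ((W₂.card * ((q - ψ) * ψ) : ℕ) : ℝ) := by
        push_cast [Nat.cast_sub hψs']
        ring
      rw [hcast, htcast, Nat.cast_le]
      calc W₂.card * ((q - ψ) * ψ) ≤ W₂.card * ((ψ + 1) * (q - ψ)) := by
            apply Nat.mul_le_mul_left
            rw [Nat.mul_comm]
            exact Nat.mul_le_mul (Nat.le_succ ψ) le_rfl
        _ ≤ g * s - a * q := hcnt2
    have hW₂mem : W₂ ∈ (nbhd G (decS0 G X F' q ψ W₁)).powerset.filter
        (fun W₂ => W₂.card ≤ t2) := by
      rw [mem_filter, mem_powerset]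
      exact ⟨hW₂U, hW₂t2⟩
    refine ⟨decode G X Y F' q ψ W₁ W₂,
      mem_biUnion.mpr ⟨W₁, hW₁I1, mem_image_of_mem _ hW₂mem⟩, ?_, ?_, ?_, ?_⟩
    · -- p.2 ⊆ N(A)
      simp only [decode]
      apply union_subset hF''A
      intro v hv
      have hv2 := (mem_filter.mp hv).2
      by_contra hvnA
      exact absurd hv2 (not_lt.mpr (hW₂cov v hvnA))
    · -- closure ⊆ p.1
      simp only [decode]
      intro u hu
      refine mem_sdiff.mpr ⟨hclS0 hu, ?_⟩
      intro hunb
      obtain ⟨v, hv, huv⟩ := mem_biUnion.mp hunb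
      have hvnbA : v ∈ nbhd G A := by
        apply (mem_filter.mp hu).2
        rw [SimpleGraph.mem_neighborFinset] at huv ⊢
        exact huv.symm
      exact hW₂A v hv hvnbA
    · -- degree in F
      simp only [decode]
      intro u hu
      have hu1 : u ∈ decS0 G X F' q ψ W₁ := (mem_sdiff.mp hu).1
      calc q - ψ ≤ (G.neighborFinset u ∩ (F' ∪ nbhd G W₁)).card := (mem_filter.mp hu1).2
        _ ≤ _ := card_le_card (inter_subset_inter Subset.rfl subset_union_left)
    · -- degree outside
      simp only [decode]
      intro v hv
      obtain ⟨hvY, hvF⟩ := mem_sdiff.mp hv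
      have hvf2 : (G.neighborFinset v ∩ (decS0 G X F' q ψ W₁ \ nbhd G W₂)).card ≤ ψ := by
        by_contra hc
        push_neg at hc
        exact (notMem_union.mp hvF).2 (mem_filter.mpr ⟨hvY, hc⟩)
      have hNvX : G.neighborFinset v ⊆ X := hnbY v hvY
      have hNvs : (G.neighborFinset v).card = s := by
        rw [SimpleGraph.card_neighborFinset_eq_degree]; exact hdegY v hvY
      have heq : G.neighborFinset v ∩ (X \ (decS0 G X F' q ψ W₁ \ nbhd G W₂))
          = G.neighborFinset v \ (decS0 G X F' q ψ W₁ \ nbhd G W₂) := by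
        ext u
        simp only [mem_inter, mem_sdiff]
        constructor
        · tauto
        · intro h
          exact ⟨h.1, hNvX h.1, h.2⟩
      have hsplit : (G.neighborFinset v ∩ (decS0 G X F' q ψ W₁ \ nbhd G W₂)).card
          + (G.neighborFinset v \ (decS0 G X F' q ψ W₁ \ nbhd G W₂)).card = s := by
        rw [card_inter_add_card_sdiff, hNvs]
      rw [heq]
      omega
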